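/- For all n ≥ 0, if |x| ≥ 2 then sgn(x)^n · S_n(x) = |S_n(x)| and sgn(x)^n · x · S_{n-1}(x) ≥ 2·|S_{n-1}(x)|. -/
import Mathlib


/-- For all `n ≥ 0`, if `|x| ≥ 2` then
`sgn(x)^n · S_n(x) = |S_n(x)|` and `sgn(x)^n · x · S_{n-1}(x) ≥ 2 · |S_{n-1}(x)|`,
where `S : ℤ → ℝ → ℝ` is the family of dilated Chebyshev polynomials of the second
kind (`S_{-1} = 0`, `S_0 = 1`, `S_{n+1}(x) = x S_n(x) - S_{n-1}(x)`). -/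
theorem chebyshev_abs_ge_two
    (S : ℤ → ℝ → ℝ)
    (hSm1 : ∀ x : ℝ, S (-1) x = 0)
    (hS0 : ∀ x : ℝ, S 0 x = 1)
    (hrec : ∀ (n : ℤ) (x : ℝ), S (n + 1) x = x * S n x - S (n - 1) x)
    (n : ℕ) (x : ℝ) (hx : 2 ≤ |x|) :
    (Real.sign x) ^ n * S (n : ℤ) x = |S (n : ℤ) x| ∧
    (Real.sign x) ^ n * (x * S ((n : ℤ) - 1) x) ≥ 2 * |S ((n : ℤ) - 1) x| := by
  have hx0 : x ≠ 0 := by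
    intro h; rw [h] at hx; simp at hx; linarith
  set s := Real.sign x with hs
  have hsx : s * x = |x| := by
    rcases lt_or_gt_of_ne hx0 with h | h
    · rw [hs, Real.sign_of_neg h, abs_of_neg h]; ring
    · rw [hs, Real.sign_of_pos h, abs_of_pos h]; ring
  have habs : |s| = 1 := by
    rcases lt_or_gt_of_ne hx0 with h | h
    · rw [hs, Real.sign_of_neg h]; norm_num
    · rw [hs, Real.sign_of_pos h]; norm_num
  have hsq : s * s = 1 := by
    rcases lt_or_gt_of_ne hx0 with h | h
    · rw [hs, Real.sign_of_neg h]; norm_num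
    · rw [hs, Real.sign_of_pos h]; norm_num
  have hS1 : S 1 x = x := by
    have := hrec 0 x
    simp [hS0, hSm1] at this
    simpa using this
  have key : ∀ m : ℕ, 1 ≤ s ^ m * S (m : ℤ) x ∧
      s ^ m * S (m : ℤ) x ≤ s ^ (m + 1) * S ((m : ℤ) + 1) x := by
    intro m
    induction m with
    | zero =>
      simp [hS0, hS1]
      rw [hsx]; linarith
    | succ k ih =>
      obtain ⟨h1, h2⟩ := ih
      have hr := hrec ((k : ℤ) + 1) x
      have hcast : ((k : ℤ) + 1 - 1) = (k : ℤ) := by ring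
      rw [hcast] at hr
      have hA : s ^ (k + 2) * S ((k : ℤ) + 1 + 1) x
          = |x| * (s ^ (k + 1) * S ((k : ℤ) + 1) x) - s ^ k * S (k : ℤ) x := by
        have hp1 : s ^ (k + 2) * x = s ^ (k + 1) * |x| := by
          rw [pow_succ, mul_assoc, hsx]
        have hp2 : s ^ (k + 2) = s ^ k := by
          rw [pow_add, pow_two, hsq, mul_one]
        calc s ^ (k + 2) * S ((k : ℤ) + 1 + 1) x
            = (s ^ (k + 2) * x) * S ((k : ℤ) + 1) x - s ^ (k + 2) * S (k : ℤ) x := by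
              rw [hr]; ring
          _ = |x| * (s ^ (k + 1) * S ((k : ℤ) + 1) x) - s ^ k * S (k : ℤ) x := by
              rw [hp1, hp2]; ring
      constructor
      · push_cast
        linarith
      · push_cast
        push_cast at hA
        nlinarith
  rcases n with _ | m
  · constructor
    · simp [hS0]
    · simp [hSm1]
  · obtain ⟨h1, _⟩ := key m
    have habsm : |S (m : ℤ) x| = s ^ m * S (m : ℤ) x := by
      have : |s ^ m * S (m : ℤ) x| = s ^ m * S (m : ℤ) x := abs_of_pos (by linarith)
      rw [abs_mul, abs_pow, habs, one_pow, one_mul] at this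
      exact this
    constructor
    · obtain ⟨h1', _⟩ := key (m + 1)
      have : |S ((m : ℤ) + 1) x| = s ^ (m + 1) * S ((m : ℤ) + 1) x := by
        have h := abs_of_pos (show (0:ℝ) < s ^ (m + 1) * S ((m : ℤ) + 1) x by
          push_cast at h1'; linarith)
        rw [abs_mul, abs_pow, habs, one_pow, one_mul] at h
        exact h
      push_cast
      linarith [this]
    · have hcast : ((m : ℤ) + 1 - 1) = (m : ℤ) := by ring
      push_cast [hcast]
      have : s ^ (m + 1) * (x * S (m : ℤ) x) = |x| * (s ^ m * S (m : ℤ) x) := by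
        rw [← hsx]; ring
      rw [this, habsm]
      nlinarith
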